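/- Let μ ≥ 0, σ > 0, r > 0, and for s > 0 set S(s) = ∑_{n=1}^∞ (e^{-rns}/n)·P[σ B_{ns} + μ·ns ≤ 0], where B is standard Brownian motion. Then (1/(2√2))·(-ln(1 - e^{-s(r+μ²/σ²)})) ≤ S(s) ≤ (1/2)·(-ln(1 - e^{-s(r+μ²/(2σ²))})), and consequently (1 - e^{-s(r+μ²/(2σ²))})^{1/2} ≤ e^{-S(s)} ≤ (1 - e^{-s(r+μ²/σ²)})^{1/(2√2)}. -/

import Mathlib

open MeasureTheory ProbabilityTheory Real

open Set in
lemma half_gauss_shift (b a : ℝ) :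
    ∫ x in Set.Iic a, Real.exp (-b * (x - a)^2) = Real.sqrt (π / b) / 2 := by
  have A : MeasurableEmbedding (fun x : ℝ => x + a) :=
    (Homeomorph.addRight a).measurableEmbedding
  have h1 := A.setIntegral_map (μ := volume)
    (g := fun x => Real.exp (-b * (x - a)^2)) (s := Set.Iic a)
  rw [Measure.IsAddRightInvariant.map_add_right_eq_self (μ := (volume : Measure ℝ)) a] at h1
  have hpre : (fun x : ℝ => x + a) ⁻¹' Set.Iic a = Set.Iic 0 := by
    ext x; simp
  rw [h1, hpre]
  have h2 := integral_comp_neg_Iic (0:ℝ) (fun x => Real.exp (-b * x^2))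
  simp only [add_sub_cancel_right, neg_zero] at h2 ⊢
  have : ∀ x : ℝ, Real.exp (-b * (-x)^2) = Real.exp (-b * x^2) := by intro x; ring_nf
  simp_rw [this] at h2
  rw [h2, integral_gaussian_Ioi]

lemma gauss_Iic_bounds {v a : ℝ} (hv : 0 < v) (ha : a ≤ 0) :
    Real.exp (-a^2 / v) / (2 * Real.sqrt 2) ≤ (∫ x in Set.Iic a, gaussianPDFReal 0 v.toNNReal x)
      ∧ (∫ x in Set.Iic a, gaussianPDFReal 0 v.toNNReal x) ≤ Real.exp (-a^2 / (2*v)) / 2 := by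
  have hvv : ((v.toNNReal : ℝ)) = v := Real.coe_toNNReal v hv.le
  have hpdf : ∀ x : ℝ, gaussianPDFReal 0 v.toNNReal x
      = (Real.sqrt (2*π*v))⁻¹ * Real.exp (-x^2 / (2*v)) := by
    intro x; rw [gaussianPDFReal]; rw [hvv]; ring_nf
  have hsq : (0:ℝ) < Real.sqrt (2*π*v) := Real.sqrt_pos.2 (by positivity)
  have hint : IntegrableOn (gaussianPDFReal 0 v.toNNReal) (Set.Iic a) :=
    (integrable_gaussianPDFReal _ _).integrableOn
  constructor
  · -- lower bound
    have hpt : ∀ x ∈ Set.Iic a,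
        (Real.sqrt (2*π*v))⁻¹ * Real.exp (-a^2/v) * Real.exp (-(1/v) * (x - a)^2)
          ≤ gaussianPDFReal 0 v.toNNReal x := by
      intro x hx
      rw [hpdf, mul_assoc, ← Real.exp_add]
      refine mul_le_mul_of_nonneg_left (Real.exp_le_exp.2 ?_) (by positivity)
      have heq : -a^2/v + -(1/v) * (x - a)^2 = (-2*a^2 + -2*(x-a)^2)/(2*v) := by
        field_simp
      rw [heq, div_le_div_iff_of_pos_right (by positivity)]
      nlinarith [sq_nonneg (x - 2*a)]
    have hint' : IntegrableOn (fun x : ℝ => (Real.sqrt (2*π*v))⁻¹ * Real.exp (-a^2/v) *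
        Real.exp (-(1/v) * (x - a)^2)) (Set.Iic a) := by
      have : Integrable (fun x : ℝ => Real.exp (-(1/v) * (x - a)^2)) := by
        have := (integrable_exp_neg_mul_sq (b := 1/v) (by positivity)).comp_sub_right a
        simpa using this
      exact (this.const_mul _).integrableOn
    have h1 := setIntegral_mono_on hint' hint measurableSet_Iic hpt
    rw [integral_const_mul] at h1
    refine le_trans (le_of_eq ?_) h1
    rw [half_gauss_shift]
    have h2 : π / (1/v) = π * v := by field_simp
    have h3 : Real.sqrt (2*π*v) = Real.sqrt 2 * Real.sqrt (π*v) := by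
      rw [mul_assoc, Real.sqrt_mul (by norm_num)]
    rw [h2, h3]
    have hpv : (0:ℝ) < Real.sqrt (π*v) := Real.sqrt_pos.2 (by positivity)
    have h2' : (0:ℝ) < Real.sqrt 2 := by positivity
    field_simp
  · -- upper bound
    have hpt : ∀ x ∈ Set.Iic a, gaussianPDFReal 0 v.toNNReal x
        ≤ (Real.sqrt (2*π*v))⁻¹ * Real.exp (-a^2/(2*v)) * Real.exp (-(1/(2*v)) * (x - a)^2) := by
      intro x hx
      rw [hpdf, mul_assoc ((Real.sqrt (2*π*v))⁻¹), ← Real.exp_add]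
      refine mul_le_mul_of_nonneg_left (Real.exp_le_exp.2 ?_) (by positivity)
      have heq : -a^2/(2*v) + -(1/(2*v)) * (x - a)^2 = (-a^2 + -(x-a)^2)/(2*v) := by
        field_simp
      rw [heq, div_le_div_iff_of_pos_right (by positivity)]
      have hax : a * a ≤ a * x := mul_le_mul_of_nonpos_left hx ha
      nlinarith
    have hint' : IntegrableOn (fun x : ℝ => (Real.sqrt (2*π*v))⁻¹ * Real.exp (-a^2/(2*v)) *
        Real.exp (-(1/(2*v)) * (x - a)^2)) (Set.Iic a) := by
      have : Integrable (fun x : ℝ => Real.exp (-(1/(2*v)) * (x - a)^2)) := by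
        have := (integrable_exp_neg_mul_sq (b := 1/(2*v)) (by positivity)).comp_sub_right a
        simpa using this
      exact (this.const_mul _).integrableOn
    have h1 := setIntegral_mono_on hint hint' measurableSet_Iic hpt
    rw [integral_const_mul] at h1
    refine le_trans h1 (le_of_eq ?_)
    rw [half_gauss_shift]
    have h2 : π / (1/(2*v)) = 2*π*v := by field_simp
    rw [h2]
    field_simp

lemma prob_eq_integral {Ω : Type*} [MeasurableSpace Ω] (P : Measure Ω) [IsProbabilityMeasure P]
    (B : Ω → ℝ) {t : ℝ} (ht : 0 < t) (hB : Measure.map B P = gaussianReal 0 t.toNNReal)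
    {σ : ℝ} (μ : ℝ) (hσ : 0 < σ) :
    (P {ω | σ * B ω + μ * t ≤ 0}).toReal
      = ∫ x in Set.Iic (-(μ*t)/σ), gaussianPDFReal 0 t.toNNReal x := by
  have hv : t.toNNReal ≠ 0 := by
    simp only [ne_eq, Real.toNNReal_eq_zero, not_le]; exact ht
  have hmeas : AEMeasurable B P := by
    by_contra h
    rw [Measure.map_of_not_aemeasurable h] at hB
    have h1 : (gaussianReal 0 t.toNNReal) Set.univ = 1 := measure_univ
    rw [← hB] at h1
    simp at h1
  have hset : {ω | σ * B ω + μ * t ≤ 0} = B ⁻¹' Set.Iic (-(μ*t)/σ) := by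
    ext ω
    simp only [Set.mem_setOf_eq, Set.mem_preimage, Set.mem_Iic, le_div_iff₀ hσ]
    constructor <;> intro h <;> nlinarith
  rw [hset, ← Measure.map_apply_of_aemeasurable hmeas measurableSet_Iic, hB,
    gaussianReal_apply_eq_integral _ hv,
    ENNReal.toReal_ofReal (integral_nonneg (fun x => gaussianPDFReal_nonneg _ _ _))]

/-- Bounds on `S(s) = ∑_{n≥1} (e^{-rns}/n)·P[σB_{ns} + μns ≤ 0]` for `μ ≥ 0`:
`(1/(2√2))·(-ln(1-e^{-s(r+μ²/σ²)})) ≤ S(s) ≤ (1/2)·(-ln(1-e^{-s(r+μ²/(2σ²))}))`, and hence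
`(1-e^{-s(r+μ²/(2σ²))})^{1/2} ≤ e^{-S(s)} ≤ (1-e^{-s(r+μ²/σ²)})^{1/(2√2)}`. -/
theorem S_bounds_nonneg_drift {Ω : Type*} [MeasurableSpace Ω]
    (P : Measure Ω) [IsProbabilityMeasure P]
    (B : ℝ → Ω → ℝ)
    (hB : ∀ t : ℝ, 0 ≤ t → Measure.map (B t) P = gaussianReal 0 t.toNNReal)
    (σ μ r : ℝ) (hσ : 0 < σ) (hμ : 0 ≤ μ) (hr : 0 < r)
    (S : ℝ → ℝ)
    (hS : ∀ s : ℝ, 0 < s → S s = ∑' n : ℕ,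
      Real.exp (-r * (n + 1) * s) / (n + 1) *
        (P {ω | σ * B ((n + 1) * s) ω + μ * ((n + 1) * s) ≤ 0}).toReal)
    (s : ℝ) (hs : 0 < s) :
    (1 / (2 * Real.sqrt 2)) * (-Real.log (1 - Real.exp (-s * (r + μ ^ 2 / σ ^ 2)))) ≤ S s ∧
    S s ≤ (1 / 2) * (-Real.log (1 - Real.exp (-s * (r + μ ^ 2 / (2 * σ ^ 2))))) ∧
    (1 - Real.exp (-s * (r + μ ^ 2 / (2 * σ ^ 2)))) ^ ((1 : ℝ) / 2) ≤ Real.exp (-S s) ∧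
    Real.exp (-S s) ≤
      (1 - Real.exp (-s * (r + μ ^ 2 / σ ^ 2))) ^ ((1 : ℝ) / (2 * Real.sqrt 2)) := by
  have hσ' : σ ≠ 0 := hσ.ne'
  set q₁ := Real.exp (-s * (r + μ ^ 2 / σ ^ 2)) with hq₁def
  set q₂ := Real.exp (-s * (r + μ ^ 2 / (2 * σ ^ 2))) with hq₂def
  have hq₁pos : 0 < q₁ := Real.exp_pos _
  have hq₂pos : 0 < q₂ := Real.exp_pos _
  have hq₁lt : q₁ < 1 := by
    rw [hq₁def]
    have harg : -s * (r + μ ^ 2 / σ ^ 2) < 0 := by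
      have : 0 < r + μ ^ 2 / σ ^ 2 := by positivity
      nlinarith
    have := Real.exp_lt_exp.2 harg
    simpa using this
  have hq₂lt : q₂ < 1 := by
    rw [hq₂def]
    have harg : -s * (r + μ ^ 2 / (2 * σ ^ 2)) < 0 := by
      have : 0 < r + μ ^ 2 / (2 * σ ^ 2) := by positivity
      nlinarith
    have := Real.exp_lt_exp.2 harg
    simpa using this
  have habs₁ : |q₁| < 1 := by rw [abs_of_pos hq₁pos]; exact hq₁lt
  have habs₂ : |q₂| < 1 := by rw [abs_of_pos hq₂pos]; exact hq₂lt
  have hLow := (Real.hasSum_pow_div_log_of_abs_lt_one habs₁).mul_left (1 / (2 * Real.sqrt 2))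
  have hUp := (Real.hasSum_pow_div_log_of_abs_lt_one habs₂).mul_left (1 / 2)
  set f : ℕ → ℝ := fun n : ℕ => Real.exp (-r * (n + 1) * s) / (n + 1) *
      (P {ω | σ * B ((n + 1) * s) ω + μ * ((n + 1) * s) ≤ 0}).toReal with hf
  have key : ∀ n : ℕ, (1 / (2 * Real.sqrt 2)) * (q₁ ^ (n + 1) / ((n : ℝ) + 1)) ≤ f n ∧
      f n ≤ (1 / 2) * (q₂ ^ (n + 1) / ((n : ℝ) + 1)) := by
    intro n
    have ht : 0 < ((n : ℝ) + 1) * s := by positivity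
    have htne : ((n : ℝ) + 1) * s ≠ 0 := ht.ne'
    have hp := prob_eq_integral P (B (((n : ℝ) + 1) * s)) ht (hB _ ht.le) μ hσ
    have ha : -(μ * (((n : ℝ) + 1) * s)) / σ ≤ 0 := by
      apply div_nonpos_of_nonpos_of_nonneg _ hσ.le
      nlinarith
    have hb := gauss_Iic_bounds ht ha
    rw [← hp] at hb
    have e1 : -(-(μ * (((n : ℝ) + 1) * s)) / σ) ^ 2 / (((n : ℝ) + 1) * s)
        = -(μ ^ 2 / σ ^ 2) * (((n : ℝ) + 1) * s) := by
      field_simp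
    have e2 : -(-(μ * (((n : ℝ) + 1) * s)) / σ) ^ 2 / (2 * (((n : ℝ) + 1) * s))
        = -(μ ^ 2 / (2 * σ ^ 2)) * (((n : ℝ) + 1) * s) := by
      field_simp
    rw [e1, e2] at hb
    have hC : (0 : ℝ) ≤ Real.exp (-r * ((n : ℝ) + 1) * s) / ((n : ℝ) + 1) := by positivity
    have hpow1 : q₁ ^ (n + 1) = Real.exp (-r * ((n : ℝ) + 1) * s) *
        Real.exp (-(μ ^ 2 / σ ^ 2) * (((n : ℝ) + 1) * s)) := by
      rw [hq₁def, ← Real.exp_nat_mul, ← Real.exp_add]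
      congr 1; push_cast; ring
    have hpow2 : q₂ ^ (n + 1) = Real.exp (-r * ((n : ℝ) + 1) * s) *
        Real.exp (-(μ ^ 2 / (2 * σ ^ 2)) * (((n : ℝ) + 1) * s)) := by
      rw [hq₂def, ← Real.exp_nat_mul, ← Real.exp_add]
      congr 1; push_cast; ring
    constructor
    · have h1 := mul_le_mul_of_nonneg_left hb.1 hC
      refine le_trans (le_of_eq ?_) h1
      rw [hpow1]; ring
    · have h1 := mul_le_mul_of_nonneg_left hb.2 hC
      refine le_trans h1 (le_of_eq ?_)
      rw [hpow2]; ring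
  have hfnonneg : ∀ n, 0 ≤ f n := fun n =>
    mul_nonneg (by positivity) ENNReal.toReal_nonneg
  have hfsum : Summable f :=
    Summable.of_nonneg_of_le hfnonneg (fun n => (key n).2) hUp.summable
  have hSf : S s = ∑' n, f n := hS s hs
  have hL : (1 / (2 * Real.sqrt 2)) * (-Real.log (1 - q₁)) ≤ S s := by
    rw [hSf]
    exact hasSum_le (fun n => (key n).1) hLow hfsum.hasSum
  have hU : S s ≤ (1 / 2) * (-Real.log (1 - q₂)) := by
    rw [hSf]
    exact hasSum_le (fun n => (key n).2) hfsum.hasSum hUp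
  have h1q₁ : 0 < 1 - q₁ := by linarith
  have h1q₂ : 0 < 1 - q₂ := by linarith
  refine ⟨hL, hU, ?_, ?_⟩
  · have heq : (1 - q₂) ^ ((1 : ℝ) / 2)
        = Real.exp (-((1 / 2) * (-Real.log (1 - q₂)))) := by
      rw [Real.rpow_def_of_pos h1q₂]; congr 1; ring
    rw [heq]
    exact Real.exp_le_exp.2 (by linarith)
  · have heq : (1 - q₁) ^ ((1 : ℝ) / (2 * Real.sqrt 2))
        = Real.exp (-((1 / (2 * Real.sqrt 2)) * (-Real.log (1 - q₁)))) := by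
      rw [Real.rpow_def_of_pos h1q₁]; congr 1; ring
    rw [heq]
    exact Real.exp_le_exp.2 (by linarith)
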